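/- Let $T$ be a positive random variable with strictly positive density $q$ on $(0,\infty)$, and suppose $E[T^{1-1/\beta}] < \infty$ for some $\beta \in (1,2)$. Let $(T, \Delta_1^*)$ have joint density $c_\beta\, s_1^{-1/\beta}\, s_0^{-1}\, q(s_0 - s_1)$ on $\{0 < s_1 < s_0\}$ with $c_\beta = (\beta \Gamma(1 - 1/\beta))^{-1}$ (the size-biased first jump of a $1/\beta$-stable subordinator at time 1). Then $E[T - \Delta_1^*] \leq C\, E[T^{1-1/\beta}]$ for some finite constant $C$ depending only on $\beta$; in particular $E[T - \Delta_1^*] < \infty$. -/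

import Mathlib

open MeasureTheory
open scoped ENNReal

private theorem stmt15_aux1 (p u : ℝ) (hp1 : p < 1) (hu : 0 < u) :
    ∫⁻ x in Set.Ioc (0:ℝ) u, ENNReal.ofReal (x ^ (-p))
      = ENNReal.ofReal (u ^ (1-p) / (1-p)) := by
  have hint : IntegrableOn (fun x : ℝ => x ^ (-p)) (Set.Ioc 0 u) := by
    rw [← intervalIntegrable_iff_integrableOn_Ioc_of_le hu.le]
    exact intervalIntegral.intervalIntegrable_rpow' (by linarith)
  rw [← ofReal_integral_eq_lintegral_ofReal hint]
  · congr 1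
    rw [← intervalIntegral.integral_of_le hu.le,
      integral_rpow (Or.inl (by linarith : (-1:ℝ) < -p)),
      Real.zero_rpow (by linarith : -p + 1 ≠ 0)]
    rw [show -p + 1 = 1 - p by ring]
    ring
  · filter_upwards [self_mem_ae_restrict measurableSet_Ioc] with x hx
    exact Real.rpow_nonneg hx.1.le _

private theorem stmt15_aux2 (p u : ℝ) (hp0 : 0 < p) (hu : 0 < u) :
    ∫⁻ x in Set.Ioi u, ENNReal.ofReal (x ^ (-1-p)) = ENNReal.ofReal (u ^ (-p) / p) := by
  rw [← ofReal_integral_eq_lintegral_ofReal (integrableOn_Ioi_rpow_of_lt (by linarith) hu)]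
  · congr 1
    rw [integral_Ioi_rpow_of_lt (by linarith) hu]
    rw [show -1 - p + 1 = -p by ring]
    field_simp
  · filter_upwards [self_mem_ae_restrict measurableSet_Ioi] with x hx
    exact Real.rpow_nonneg (hu.trans hx).le _

private theorem stmt15_kern (p u : ℝ) (hp0 : 0 < p) (hp1 : p < 1) (hu : 0 < u) :
    ∫⁻ x in Set.Ioi (0:ℝ), ENNReal.ofReal (x ^ (-p) * (x + u)⁻¹)
      ≤ ENNReal.ofReal ((1/(1-p) + 1/p) * u ^ (-p)) := by
  rw [← Set.Ioc_union_Ioi_eq_Ioi hu.le,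
    lintegral_union measurableSet_Ioi Set.Ioc_disjoint_Ioi_same]
  have h1 : ∫⁻ x in Set.Ioc (0:ℝ) u, ENNReal.ofReal (x ^ (-p) * (x + u)⁻¹)
      ≤ ENNReal.ofReal (u⁻¹ * (u ^ (1-p) / (1-p))) := by
    calc ∫⁻ x in Set.Ioc (0:ℝ) u, ENNReal.ofReal (x ^ (-p) * (x + u)⁻¹)
        ≤ ∫⁻ x in Set.Ioc (0:ℝ) u, ENNReal.ofReal (u⁻¹) * ENNReal.ofReal (x ^ (-p)) := by
          refine setLIntegral_mono' measurableSet_Ioc fun x hx => ?_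
          rw [← ENNReal.ofReal_mul (by positivity)]
          refine ENNReal.ofReal_le_ofReal ?_
          rw [mul_comm (u⁻¹)]
          exact mul_le_mul_of_nonneg_left (inv_anti₀ hu (by linarith [hx.1]))
            (Real.rpow_nonneg hx.1.le _)
      _ = ENNReal.ofReal (u⁻¹) * ENNReal.ofReal (u ^ (1-p) / (1-p)) := by
          rw [lintegral_const_mul' _ _ ENNReal.ofReal_ne_top, stmt15_aux1 p u hp1 hu]
      _ = ENNReal.ofReal (u⁻¹ * (u ^ (1-p) / (1-p))) := by
          rw [ENNReal.ofReal_mul (by positivity)]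
  have h2 : ∫⁻ x in Set.Ioi u, ENNReal.ofReal (x ^ (-p) * (x + u)⁻¹)
      ≤ ENNReal.ofReal (u ^ (-p) / p) := by
    rw [← stmt15_aux2 p u hp0 hu]
    refine setLIntegral_mono' measurableSet_Ioi fun x hx => ?_
    have hx0 : (0:ℝ) < x := hu.trans hx
    refine ENNReal.ofReal_le_ofReal ?_
    calc x ^ (-p) * (x + u)⁻¹ ≤ x ^ (-p) * x⁻¹ :=
          mul_le_mul_of_nonneg_left (inv_anti₀ hx0 (by linarith)) (Real.rpow_nonneg hx0.le _)
      _ = x ^ (-1-p) := by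
          rw [show (-1-p : ℝ) = -p + (-1) by ring, Real.rpow_add hx0, Real.rpow_neg_one]
  calc _ ≤ ENNReal.ofReal (u⁻¹ * (u ^ (1-p) / (1-p))) + ENNReal.ofReal (u ^ (-p) / p) :=
        add_le_add h1 h2
    _ ≤ ENNReal.ofReal ((1/(1-p) + 1/p) * u ^ (-p)) := by
        rw [← ENNReal.ofReal_add
          (mul_nonneg (inv_nonneg.2 hu.le)
            (div_nonneg (Real.rpow_nonneg hu.le _) (by linarith)))
          (div_nonneg (Real.rpow_nonneg hu.le _) hp0.le)]
        refine ENNReal.ofReal_le_ofReal (le_of_eq ?_)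
        have key : u⁻¹ * u ^ (1-p) = u ^ (-p) := by
          rw [show (-p : ℝ) = -1 + (1-p) by ring, Real.rpow_add hu, Real.rpow_neg_one]
        calc u⁻¹ * (u ^ (1-p) / (1-p)) + u ^ (-p) / p
            = (u⁻¹ * u ^ (1-p)) / (1-p) + u ^ (-p) / p := by ring
          _ = (1/(1-p) + 1/p) * u ^ (-p) := by rw [key]; ring

/-- Let `q` be a strictly positive probability density on `(0,∞)` (the density of
`T = T₁^β`), with `E[T^{1-1/β}] < ∞`, for `β ∈ (1,2)`.  With the joint density
`c_β s₁^{-1/β} s₀⁻¹ q(s₀ - s₁)` of `(T, Δ₁*)` on `{0 < s₁ < s₀}`, where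
`c_β = (β Γ(1 - 1/β))⁻¹`, one has `E[T - Δ₁*] ≤ C E[T^{1-1/β}]` for some finite
constant `C` depending only on `β`; in particular `E[T - Δ₁*] < ∞`. -/
theorem stmt15 (β : ℝ) (hβ : β ∈ Set.Ioo (1 : ℝ) 2) (q : ℝ → ℝ)
    (hq_nonneg : ∀ x, 0 ≤ q x) (hq_pos : ∀ x > (0 : ℝ), 0 < q x)
    (hq_meas : Measurable q)
    (hq_density : ∫⁻ x in Set.Ioi (0 : ℝ), ENNReal.ofReal (q x) = 1)
    (hmom : (∫⁻ s₀ in Set.Ioi (0 : ℝ), ENNReal.ofReal (s₀ ^ (1 - 1 / β) * q s₀)) < ⊤) :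
    ∃ C : ℝ≥0∞, C < ⊤ ∧
      (∫⁻ s₀ in Set.Ioi (0 : ℝ), ∫⁻ s₁ in Set.Ioo (0 : ℝ) s₀,
          ENNReal.ofReal ((s₀ - s₁) *
            ((β * Real.Gamma (1 - 1 / β))⁻¹ * s₁ ^ (-(1 / β)) * s₀⁻¹ * q (s₀ - s₁))))
        ≤ C * ∫⁻ s₀ in Set.Ioi (0 : ℝ), ENNReal.ofReal (s₀ ^ (1 - 1 / β) * q s₀) ∧
      (∫⁻ s₀ in Set.Ioi (0 : ℝ), ∫⁻ s₁ in Set.Ioo (0 : ℝ) s₀,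
          ENNReal.ofReal ((s₀ - s₁) *
            ((β * Real.Gamma (1 - 1 / β))⁻¹ * s₁ ^ (-(1 / β)) * s₀⁻¹ * q (s₀ - s₁))))
        < ⊤ := by
  obtain ⟨hβ1, hβ2⟩ := hβ
  have hβ0 : (0:ℝ) < β := by linarith
  set p : ℝ := 1/β with hp_def
  have hp0 : 0 < p := by positivity
  have hp1 : p < 1 := by rw [hp_def, div_lt_one hβ0]; linarith
  set c : ℝ := (β * Real.Gamma (1 - p))⁻¹ with hc_def
  have hΓ : 0 < Real.Gamma (1 - p) := Real.Gamma_pos_of_pos (by linarith)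
  have hc0 : 0 ≤ c := le_of_lt (inv_pos.2 (mul_pos hβ0 hΓ))
  set K : ℝ := 1/(1-p) + 1/p with hK_def
  have hK0 : 0 ≤ K :=
    le_of_lt (add_pos (div_pos one_pos (by linarith)) (div_pos one_pos hp0))
  set W : ℝ × ℝ → ℝ≥0∞ := fun x =>
    if 0 < x.2 ∧ x.2 < x.1 then
      ENNReal.ofReal (x.2 * (c * (x.1 - x.2) ^ (-p) * x.1⁻¹ * q x.2)) else 0 with hW_def
  have hWmeas : Measurable W := by
    refine Measurable.ite ?_ ?_ measurable_const
    · exact (measurableSet_lt measurable_const measurable_snd).inter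
        (measurableSet_lt measurable_snd measurable_fst)
    · exact (measurable_snd.mul (((measurable_const.mul
        ((measurable_fst.sub measurable_snd).pow_const (-p))).mul
        measurable_fst.inv).mul (hq_meas.comp measurable_snd))).ennreal_ofReal
  have key : (∫⁻ s₀ in Set.Ioi (0 : ℝ), ∫⁻ s₁ in Set.Ioo (0 : ℝ) s₀,
      ENNReal.ofReal ((s₀ - s₁) * (c * s₁ ^ (-p) * s₀⁻¹ * q (s₀ - s₁))))
      ≤ ENNReal.ofReal (c * K) *
        ∫⁻ s₀ in Set.Ioi (0 : ℝ), ENNReal.ofReal (s₀ ^ (1 - p) * q s₀) := by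
    calc (∫⁻ s₀ in Set.Ioi (0 : ℝ), ∫⁻ s₁ in Set.Ioo (0 : ℝ) s₀,
        ENNReal.ofReal ((s₀ - s₁) * (c * s₁ ^ (-p) * s₀⁻¹ * q (s₀ - s₁))))
        = ∫⁻ s₀ in Set.Ioi (0 : ℝ), ∫⁻ u in Set.Ioo (0 : ℝ) s₀,
            ENNReal.ofReal (u * (c * (s₀ - u) ^ (-p) * s₀⁻¹ * q u)) := by
          refine lintegral_congr fun s₀ => ?_
          have h := (Measure.measurePreserving_sub_left volume s₀).setLIntegral_comp_emb
            (MeasurableEquiv.subLeft s₀).measurableEmbedding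
            (fun u => ENNReal.ofReal (u * (c * (s₀ - u) ^ (-p) * s₀⁻¹ * q u)))
            (Set.Ioo 0 s₀)
          rw [Set.image_const_sub_Ioo, sub_self, sub_zero] at h
          rw [← h]
          refine lintegral_congr fun s₁ => ?_
          rw [sub_sub_cancel]
      _ = ∫⁻ s₀ in Set.Ioi (0 : ℝ), ∫⁻ u, W (s₀, u) := by
          refine lintegral_congr fun s₀ => ?_
          rw [← lintegral_indicator measurableSet_Ioo]
          refine lintegral_congr fun u => ?_
          simp [hW_def, Set.indicator_apply, Set.mem_Ioo]
      _ = ∫⁻ s₀, ∫⁻ u, W (s₀, u) := by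
          refine setLIntegral_eq_of_support_subset ?_
          refine Function.support_subset_iff'.2 fun s₀ hs₀ => ?_
          have hz : ∀ u : ℝ, W (s₀, u) = 0 := by
            intro u
            simp only [hW_def]
            refine if_neg fun h => ?_
            simp only [Set.mem_Ioi, not_lt] at hs₀
            exact absurd (h.1.trans h.2) (not_lt.2 hs₀)
          simp only [hz, lintegral_zero]
      _ = ∫⁻ u, ∫⁻ s₀, W (s₀, u) := lintegral_lintegral_swap hWmeas.aemeasurable
      _ = ∫⁻ u in Set.Ioi (0 : ℝ), ∫⁻ s₀, W (s₀, u) := by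
          refine (setLIntegral_eq_of_support_subset ?_).symm
          refine Function.support_subset_iff'.2 fun u hu => ?_
          have hz : ∀ s₀ : ℝ, W (s₀, u) = 0 := by
            intro s₀
            simp only [hW_def]
            refine if_neg fun h => ?_
            simp only [Set.mem_Ioi, not_lt] at hu
            exact absurd h.1 (not_lt.2 hu)
          simp only [hz, lintegral_zero]
      _ = ∫⁻ u in Set.Ioi (0 : ℝ), ∫⁻ s₀ in Set.Ioi u,
            ENNReal.ofReal (u * (c * (s₀ - u) ^ (-p) * s₀⁻¹ * q u)) := by
          refine setLIntegral_congr_fun measurableSet_Ioi (fun u hu => ?_)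
          rw [Set.mem_Ioi] at hu
          rw [← lintegral_indicator measurableSet_Ioi]
          refine lintegral_congr fun s₀ => ?_
          simp [hW_def, Set.indicator_apply, Set.mem_Ioi, hu]
      _ ≤ ∫⁻ u in Set.Ioi (0 : ℝ),
            ENNReal.ofReal (c * K) * ENNReal.ofReal (u ^ (1 - p) * q u) := by
          refine setLIntegral_mono' measurableSet_Ioi fun u hu => ?_
          rw [Set.mem_Ioi] at hu
          calc ∫⁻ s₀ in Set.Ioi u, ENNReal.ofReal (u * (c * (s₀ - u) ^ (-p) * s₀⁻¹ * q u))
              = ∫⁻ s₀ in Set.Ioi u, ENNReal.ofReal (c * u * q u)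
                  * ENNReal.ofReal ((s₀ - u) ^ (-p) * s₀⁻¹) := by
                refine lintegral_congr fun s₀ => ?_
                rw [← ENNReal.ofReal_mul (mul_nonneg (mul_nonneg hc0 hu.le) (hq_nonneg u))]
                congr 1
                ring
            _ = ENNReal.ofReal (c * u * q u)
                  * ∫⁻ s₀ in Set.Ioi u, ENNReal.ofReal ((s₀ - u) ^ (-p) * s₀⁻¹) :=
                lintegral_const_mul' _ _ ENNReal.ofReal_ne_top
            _ = ENNReal.ofReal (c * u * q u)
                  * ∫⁻ x in Set.Ioi (0:ℝ), ENNReal.ofReal (x ^ (-p) * (x + u)⁻¹) := by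
                congr 1
                have h := (measurePreserving_add_right volume u).setLIntegral_comp_emb
                  (measurableEmbedding_addRight u)
                  (fun y => ENNReal.ofReal ((y - u) ^ (-p) * y⁻¹)) (Set.Ioi 0)
                rw [Set.image_add_const_Ioi, zero_add] at h
                rw [← h]
                refine lintegral_congr fun x => ?_
                rw [add_sub_cancel_right]
            _ ≤ ENNReal.ofReal (c * u * q u) * ENNReal.ofReal (K * u ^ (-p)) := by
                exact mul_le_mul_right (stmt15_kern p u hp0 hp1 hu) _
            _ = ENNReal.ofReal (c * K) * ENNReal.ofReal (u ^ (1 - p) * q u) := by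
                rw [← ENNReal.ofReal_mul (mul_nonneg (mul_nonneg hc0 hu.le) (hq_nonneg u)),
                  ← ENNReal.ofReal_mul (mul_nonneg hc0 hK0)]
                congr 1
                have key2 : u * u ^ (-p) = u ^ (1 - p) := by
                  rw [show (1 - p : ℝ) = 1 + (-p) by ring, Real.rpow_add hu, Real.rpow_one]
                calc (c * u * q u) * (K * u ^ (-p)) = (c * K) * ((u * u ^ (-p)) * q u) := by
                      ring
                  _ = (c * K) * (u ^ (1 - p) * q u) := by rw [key2]
      _ = ENNReal.ofReal (c * K) *
            ∫⁻ s₀ in Set.Ioi (0 : ℝ), ENNReal.ofReal (s₀ ^ (1 - p) * q s₀) :=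
          lintegral_const_mul' _ _ ENNReal.ofReal_ne_top
  exact ⟨ENNReal.ofReal (c * K), ENNReal.ofReal_lt_top, key,
    lt_of_le_of_lt key (ENNReal.mul_lt_top ENNReal.ofReal_lt_top hmom)⟩
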